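/- For n ∈ {1, 2, 3}, the quantum permutation algebra A_s(n), i.e., the universal C*-algebra generated by n² projections u_{ij} (1 ≤ i,j ≤ n) subject to u_{ij} = u_{ij}* = u_{ij}² and Σ_j u_{ij} = 1 = Σ_i u_{ij} for all i, j, is commutative and isomorphic to ℂ^{n!}. -/

import Mathlib

set_option linter.unusedSectionVars false
set_option linter.unusedVariables false
set_option maxHeartbeats 1000000

open scoped BigOperators
open Finset


section ListAux
variable {A : Type*} [Ring A]

lemma pairwise_commute_ofFn {n : ℕ} (g : Fin n → A)
    (h : ∀ a b, Commute (g a) (g b)) : (List.ofFn g).Pairwise Commute := by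
  rw [List.pairwise_iff_get]; intro i j _
  simp only [List.get_ofFn]; exact h _ _

lemma prod_cons_of_mem [DecidableEq A] {l : List A} (hl : l.Pairwise Commute) {a : A}
    (ha : a ∈ l) : l.prod = a * (l.erase a).prod := by
  have := List.Perm.prod_eq' (List.perm_cons_erase ha) hl
  simpa using this

lemma prod_eq_zero_of_pair {l : List A} (hl : l.Pairwise Commute) {a b : A}
    (ha : a ∈ l) (hb : b ∈ l) (hab : a * b = 0) (hbb : b * b = b) : l.prod = 0 := by
  classical
  by_cases hE : a = b
  · subst hE
    have ha0 : a = 0 := by rw [← hbb, hab]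
    rw [prod_cons_of_mem hl ha, ha0, zero_mul]
  · have hb' : b ∈ l.erase a := (List.mem_erase_of_ne (Ne.symm hE) (l := l) (b := a)).mpr hb
    have hl' : (l.erase a).Pairwise Commute := hl.sublist List.erase_sublist
    rw [prod_cons_of_mem hl ha, prod_cons_of_mem hl' hb', ← mul_assoc, hab, zero_mul]

lemma star_listprod {A : Type*} [Ring A] [StarRing A] (l : List A) :
    star l.prod = ((l.map star).reverse).prod := by
  induction l with
  | nil => simp
  | cons a l ih => simp [star_mul, ih]

lemma prod_idem {l : List A} (hl : l.Pairwise Commute) (hid : ∀ x ∈ l, x * x = x) :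
    l.prod * l.prod = l.prod := by
  induction l with
  | nil => simp
  | cons a l ih =>
    rw [List.pairwise_cons] at hl
    have hc : Commute a l.prod := Commute.list_prod_right _ _ hl.1
    have h1 : l.prod * l.prod = l.prod := ih hl.2 (fun x hx => hid x (List.mem_cons_of_mem a hx))
    have h2 : a * a = a := hid a List.mem_cons_self
    calc (a :: l).prod * (a :: l).prod = a * (l.prod * a) * l.prod := by
          simp [List.prod_cons, mul_assoc]
      _ = a * (a * l.prod) * l.prod := by rw [hc.eq]
      _ = a * a * (l.prod * l.prod) := by simp [mul_assoc]
      _ = (a :: l).prod := by rw [h2, h1, List.prod_cons]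

lemma sum_prod_ofFn_eq_one {N : ℕ} :
    ∀ (m : ℕ) (w : Fin m → Fin N → A), (∀ i, ∑ j, w i j = 1) →
      ∑ g : Fin m → Fin N, (List.ofFn fun i => w i (g i)).prod = 1 := by
  intro m
  induction m with
  | zero => intro w hw; simp
  | succ m ih =>
    intro w hw
    rw [← Equiv.sum_comp (Fin.consEquiv (fun _ : Fin (m+1) => Fin N))
        (fun g => (List.ofFn fun i => w i (g i)).prod)]
    rw [Fintype.sum_prod_type]
    have key : ∀ (j : Fin N) (g' : Fin m → Fin N),
        (List.ofFn fun i => w i ((Fin.consEquiv (fun _ => Fin N)) (j, g') i)).prod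
        = w 0 j * (List.ofFn fun i : Fin m => w i.succ (g' i)).prod := by
      intro j g'
      rw [List.ofFn_succ]
      simp [Fin.consEquiv, Fin.cons_zero, Fin.cons_succ]
    simp_rw [key, ← Finset.mul_sum]
    rw [ih (fun i => w i.succ) (fun i => hw i.succ)]
    simpa using hw 0

end ListAux

section PP
variable {n : ℕ} {A : Type*} [Ring A] [StarRing A] [Module ℂ A]
variable (u : Fin n → Fin n → A)

def pperm (σ : Equiv.Perm (Fin n)) : A := (List.ofFn fun i => u i (σ i)).prod

variable (hcomm : ∀ a b c d, Commute (u a b) (u c d))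
  (hself : ∀ i j, star (u i j) = u i j)
  (hidem : ∀ i j, u i j * u i j = u i j)
  (hRO : ∀ i j l, j ≠ l → u i j * u i l = 0)
  (hCO : ∀ j i k, i ≠ k → u i j * u k j = 0)

section
include hcomm

lemma pperm_pw (f : Fin n → Fin n) :
    (List.ofFn fun i => u i (f i)).Pairwise Commute :=
  pairwise_commute_ofFn _ (fun a b => hcomm _ _ _ _)

include hidem hCO in
lemma q_noninj_zero (f : Fin n → Fin n) (hf : ¬ Function.Injective f) :
    (List.ofFn fun i => u i (f i)).prod = 0 := by
  rw [Function.Injective] at hf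
  push_neg at hf
  obtain ⟨a, b, hfab, hab⟩ := hf
  refine prod_eq_zero_of_pair (pperm_pw u hcomm f)
    (a := u a (f a)) (b := u b (f b)) ?_ ?_ ?_ (hidem b (f b))
  · exact List.mem_ofFn.mpr ⟨a, rfl⟩
  · exact List.mem_ofFn.mpr ⟨b, rfl⟩
  · rw [hfab]; exact hCO (f b) a b hab

include hidem hCO in
lemma sum_pperm (hrow : ∀ i, ∑ j, u i j = 1) :
    ∑ σ : Equiv.Perm (Fin n), pperm u σ = 1 := by
  classical
  have h1 := sum_prod_ofFn_eq_one n (fun i j => u i j) hrow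
  have h2 : ∑ g : Fin n → Fin n, (List.ofFn fun i => u i (g i)).prod
      = ∑ g ∈ Finset.univ.image (fun σ : Equiv.Perm (Fin n) => ⇑σ),
          (List.ofFn fun i => u i (g i)).prod := by
    refine (Finset.sum_subset (subset_univ _) ?_).symm
    intro f _ hf
    refine q_noninj_zero u hcomm hidem hCO f ?_
    intro hinj
    exact hf (Finset.mem_image.mpr ⟨Equiv.ofBijective f
      (Finite.injective_iff_bijective.mp hinj), Finset.mem_univ _, rfl⟩)
  rw [h2, Finset.sum_image (fun x _ y _ h => Equiv.coe_fn_injective h)] at h1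
  exact h1

include hself in
lemma pperm_star (σ : Equiv.Perm (Fin n)) : star (pperm u σ) = pperm u σ := by
  rw [pperm, star_listprod]
  have h1 : (List.ofFn fun i => u i (σ i)).map star = List.ofFn fun i => u i (σ i) := by
    rw [List.map_ofFn]
    congr 1
    funext i
    exact hself i (σ i)
  rw [h1]
  refine List.Perm.prod_eq' (List.reverse_perm _) ?_
  rw [List.pairwise_reverse]
  exact List.Pairwise.imp (fun h => h.symm) (pperm_pw u hcomm σ)

include hidem hRO in
lemma u_mul_pperm (i : Fin n) (j : Fin n) (σ : Equiv.Perm (Fin n)) :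
    u i j * pperm u σ = if σ i = j then pperm u σ else 0 := by
  classical
  have hmem : u i (σ i) ∈ List.ofFn fun i' => u i' (σ i') := List.mem_ofFn.mpr ⟨i, rfl⟩
  have hsplit := prod_cons_of_mem (pperm_pw u hcomm σ) hmem
  by_cases h : σ i = j
  · rw [if_pos h, ← h]
    rw [pperm, hsplit, ← mul_assoc, hidem]
  · rw [if_neg h]
    rw [pperm, hsplit, ← mul_assoc, hRO i j (σ i) (fun hh => h hh.symm), zero_mul]

include hidem hRO hCO in
lemma sum_pperm_filter (hrow : ∀ i, ∑ j, u i j = 1) (i : Fin n) (j : Fin n) :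
    ∑ σ : Equiv.Perm (Fin n), (if σ i = j then pperm u σ else 0) = u i j := by
  classical
  have h1 : u i j = u i j * ∑ σ : Equiv.Perm (Fin n), pperm u σ := by
    rw [sum_pperm u hcomm hidem hCO hrow, mul_one]
  rw [h1, Finset.mul_sum]
  exact Finset.sum_congr rfl (fun σ _ => (u_mul_pperm u hcomm hidem hRO i j σ).symm)

include hidem hRO in
lemma pperm_mul (σ τ : Equiv.Perm (Fin n)) :
    pperm u σ * pperm u τ = if σ = τ then pperm u σ else 0 := by
  classical
  by_cases h : σ = τ
  · subst h
    rw [if_pos rfl]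
    exact prod_idem (pperm_pw u hcomm σ) (by
      intro x hx
      obtain ⟨i, rfl⟩ := List.mem_ofFn.mp hx
      exact hidem _ _)
  · rw [if_neg h]
    have hne : ∃ i, σ i ≠ τ i := by
      by_contra hc
      push_neg at hc
      exact h (Equiv.ext hc)
    obtain ⟨i, hi⟩ := hne
    rw [pperm, pperm, ← List.prod_append]
    refine prod_eq_zero_of_pair ?_ (a := u i (σ i)) (b := u i (τ i)) ?_ ?_ ?_ (hidem i (τ i))
    · rw [List.pairwise_append]
      refine ⟨pperm_pw u hcomm σ, pperm_pw u hcomm τ, fun a _ b _ => ?_⟩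
      obtain ⟨x, rfl⟩ := List.mem_ofFn.mp ‹a ∈ _›
      obtain ⟨y, rfl⟩ := List.mem_ofFn.mp ‹b ∈ _›
      exact hcomm _ _ _ _
    · exact List.mem_append_left _ (List.mem_ofFn.mpr ⟨i, rfl⟩)
    · exact List.mem_append_right _ (List.mem_ofFn.mpr ⟨i, rfl⟩)
    · exact hRO i (σ i) (τ i) hi

end
end PP

section ProjAux
variable {A : Type*} [Ring A] [Module ℂ A]

lemma half_cancel {x : A} (h : x + x = 0) : x = 0 := by
  have h2 : (2 : ℂ) • x = 0 := by rw [two_smul]; exact h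
  have := congrArg (fun y => (2 : ℂ)⁻¹ • y) h2
  simpa [smul_smul] using this

lemma proj_orth {p q : A} (hp : p * p = p) (hq : q * q = q)
    (hr : (1 - p - q) * (1 - p - q) = 1 - p - q) : p * q = 0 := by
  have h0 : p * q + q * p = 0 := by
    have key : (1 - p - q) * (1 - p - q) - (1 - p - q)
        = p * q + q * p + (p * p - p) + (q * q - q) := by noncomm_ring
    rw [hr, hp, hq] at key
    simpa using key.symm
  have h1 : q * p = -(p * q) := eq_neg_of_add_eq_zero_right h0
  have h1' : p * q = -(q * p) := eq_neg_of_add_eq_zero_left h0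
  have h2 : p * (q * p) = -(p * q) := by
    rw [h1, mul_neg, ← mul_assoc, hp]
  have h3 : p * q * p = -(q * p) := by
    rw [h1', neg_mul, mul_assoc, hp]
  rw [mul_assoc] at h3
  have h4 : p * q = q * p := neg_injective (h2.symm.trans h3)
  apply half_cancel
  rw [← h4] at h0
  exact h0

end ProjAux

section Rel
variable {n : ℕ} {A : Type*} [Ring A] [Module ℂ A]

lemma row_orth (hn3 : n ≤ 3) (u : Fin n → Fin n → A)
    (hidem : ∀ i j, u i j * u i j = u i j) (hrow : ∀ i, ∑ j, u i j = 1) :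
    ∀ i j l, j ≠ l → u i j * u i l = 0 := by
  intro i j l hjl
  have hsub : ({j, l} : Finset (Fin n)) ⊆ univ := subset_univ _
  have hsplit := Finset.sum_sdiff (f := fun j' => u i j') hsub
  rw [hrow i, Finset.sum_pair hjl] at hsplit
  have hrs : ∑ j' ∈ univ \ {j, l}, u i j' = 1 - u i j - u i l := by
    have := eq_sub_of_add_eq hsplit
    rw [this, sub_add_eq_sub_sub]
  have hcard : (univ \ ({j, l} : Finset (Fin n))).card ≤ 1 := by
    rw [Finset.card_sdiff_of_subset hsub, Finset.card_pair hjl, Finset.card_univ, Fintype.card_fin]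
    omega
  have hridem : (1 - u i j - u i l) * (1 - u i j - u i l) = 1 - u i j - u i l := by
    rw [← hrs]
    interval_cases h : (univ \ ({j, l} : Finset (Fin n))).card
    · rw [Finset.card_eq_zero] at h
      rw [h]; simp
    · rw [Finset.card_eq_one] at h
      obtain ⟨a, ha⟩ := h
      rw [ha, Finset.sum_singleton, hidem]
  exact proj_orth (hidem i j) (hidem i l) hridem

lemma col_orth (hn3 : n ≤ 3) (u : Fin n → Fin n → A)
    (hidem : ∀ i j, u i j * u i j = u i j) (hcol : ∀ j, ∑ i, u i j = 1) :
    ∀ j i k, i ≠ k → u i j * u k j = 0 := by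
  intro j i k hik
  exact row_orth hn3 (fun a b => u b a) (fun a b => hidem b a) hcol j i k hik

end Rel

section Comm
variable {n : ℕ} {A : Type*} [Ring A] [StarRing A] [Module ℂ A]

lemma gen_comm (hn3 : n ≤ 3) (u : Fin n → Fin n → A)
    (hself : ∀ i j, star (u i j) = u i j)
    (hidem : ∀ i j, u i j * u i j = u i j)
    (hrow : ∀ i, ∑ j, u i j = 1) (hcol : ∀ j, ∑ i, u i j = 1) :
    ∀ i j k l, u i j * u k l = u k l * u i j := by
  have hRO := row_orth hn3 u hidem hrow
  have hCO := col_orth hn3 u hidem hcol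
  intro i j k l
  by_cases hik : i = k
  · subst hik
    by_cases hjl : j = l
    · subst hjl; rfl
    · rw [hRO i j l hjl, hRO i l j (Ne.symm hjl)]
  · by_cases hjl : j = l
    · subst hjl
      rw [hCO j i k hik, hCO j k i (Ne.symm hik)]
    · have step1 : ∀ i', i' ≠ i → u i j * u k l * u i' j = 0 := by
        intro i' hi'
        by_cases hik' : i' = k
        · subst hik'
          rw [mul_assoc, hRO i' l j (Ne.symm hjl), mul_zero]
        · have hqe : u k l = 1 - ∑ i'' ∈ univ.erase k, u i'' l := by
            have h := hcol l
            rw [← Finset.add_sum_erase _ _ (Finset.mem_univ k)] at h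
            exact (eq_sub_of_add_eq h)
          rw [hqe, mul_sub, mul_one, sub_mul, mul_sum, sum_mul,
            hCO j i i' (Ne.symm hi'), zero_sub, neg_eq_zero]
          apply Finset.sum_eq_zero
          intro i'' hi''
          have hi''k : i'' ≠ k := (Finset.mem_erase.mp hi'').1
          by_cases h1 : i'' = i
          · rw [h1, hRO i j l hjl, zero_mul]
          · by_cases h2 : i'' = i'
            · rw [h2, mul_assoc, hRO i' l j (Ne.symm hjl), mul_zero]
            · exfalso
              have c4 : ({i, k, i', i''} : Finset (Fin n)).card = 4 := by
                rw [Finset.card_insert_of_notMem (by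
                      simp [hik, Ne.symm hi', Ne.symm h1]),
                    Finset.card_insert_of_notMem (by
                      simp [Ne.symm hik', Ne.symm hi''k]),
                    Finset.card_insert_of_notMem (by simp [Ne.symm h2]),
                    Finset.card_singleton]
              have hle := Finset.card_le_univ ({i, k, i', i''} : Finset (Fin n))
              rw [c4] at hle
              simp only [Finset.card_univ, Fintype.card_fin] at hle
              omega
      have step2 : u i j * u k l = u i j * u k l * u i j := by
        conv_lhs => rw [← mul_one (u i j * u k l), ← hcol j, Finset.mul_sum]
        rw [← Finset.add_sum_erase _ _ (Finset.mem_univ i)]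
        rw [Finset.sum_eq_zero (fun i' hi' => step1 i' (Finset.mem_erase.mp hi').1), add_zero]
      have hstar : star (u i j * u k l) = u k l * u i j := by
        rw [star_mul, hself, hself]
      have hstar2 : star (u i j * u k l * u i j) = u i j * u k l * u i j := by
        have h5 : star (u i j * u k l * u i j) = u i j * (u k l * u i j) := by
          simp [star_mul, hself, mul_assoc]
        rw [h5, ← mul_assoc]
      rw [← hstar, step2, hstar2, ← step2]
end Comm


theorem quantumPermutationAlgebra_small_n
    (n : ℕ) (hn : n = 1 ∨ n = 2 ∨ n = 3)
    (A : Type) [NormedRing A] [StarRing A] [CStarRing A] [NormedAlgebra ℂ A]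
    [StarModule ℂ A] [CompleteSpace A]
    (u : Fin n → Fin n → A)
    (hself : ∀ i j, star (u i j) = u i j)
    (hidem : ∀ i j, u i j * u i j = u i j)
    (hrow : ∀ i, ∑ j, u i j = 1)
    (hcol : ∀ j, ∑ i, u i j = 1)
    (huniv : ∀ (B : Type) [NormedRing B] [StarRing B] [CStarRing B]
      [NormedAlgebra ℂ B] [StarModule ℂ B] [CompleteSpace B]
      (v : Fin n → Fin n → B),
        (∀ i j, star (v i j) = v i j) → (∀ i j, v i j * v i j = v i j) →
        (∀ i, ∑ j, v i j = 1) → (∀ j, ∑ i, v i j = 1) →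
        ∃! φ : A →⋆ₐ[ℂ] B, ∀ i j, φ (u i j) = v i j) :
    (∀ a b : A, a * b = b * a) ∧
      Nonempty (A ≃⋆ₐ[ℂ] (Fin (Nat.factorial n) → ℂ)) := by
  classical
  have hn3 : n ≤ 3 := by rcases hn with h | h | h <;> omega
  have hcomm := gen_comm hn3 u hself hidem hrow hcol
  have hRO := row_orth hn3 u hidem hrow
  have hCO := col_orth hn3 u hidem hcol
  have hcomm' : ∀ a b c d, Commute (u a b) (u c d) := fun a b c d => hcomm a b c d
  have hcard : Fintype.card (Equiv.Perm (Fin n)) = Nat.factorial n := by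
    simp [Fintype.card_perm]
  let e : Equiv.Perm (Fin n) ≃ Fin (Nat.factorial n) := Fintype.equivFinOfCardEq hcard
  set v : Fin n → Fin n → (Fin (Nat.factorial n) → ℂ) := fun i j k => if e.symm k i = j then 1 else 0 with hv
  have hvapp : ∀ i j k, v i j k = if e.symm k i = j then 1 else 0 := fun i j k => rfl
  have hvself : ∀ i j, star (v i j) = v i j := by
    intro i j; funext k
    show star (v i j k) = v i j k
    rw [hvapp]
    by_cases h : e.symm k i = j <;> simp [h]
  have hvidem : ∀ i j, v i j * v i j = v i j := by
    intro i j; funext k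
    show v i j k * v i j k = v i j k
    rw [hvapp]
    by_cases h : e.symm k i = j <;> simp [h]
  have hvrow : ∀ i, ∑ j, v i j = 1 := by
    intro i; funext k
    rw [Finset.sum_apply]
    simp_rw [hvapp]
    rw [Finset.sum_ite_eq]
    simp
  have hvcol : ∀ j, ∑ i, v i j = 1 := by
    intro j; funext k
    rw [Finset.sum_apply]
    simp_rw [hvapp]
    have hiff : ∀ i, (e.symm k i = j) = (i = (e.symm k).symm j) := by
      intro i
      simp [Equiv.apply_eq_iff_eq_symm_apply]
    simp_rw [hiff]
    rw [Finset.sum_ite_eq']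
    simp
  obtain ⟨φ, hφ, hφuniq⟩ := huniv (Fin (Nat.factorial n) → ℂ) v hvself hvidem hvrow hvcol
  have hsum : ∑ σ : Equiv.Perm (Fin n), pperm u σ = 1 :=
    sum_pperm u hcomm' hidem hCO hrow
  let ψ : (Fin (Nat.factorial n) → ℂ) →⋆ₐ[ℂ] A :=
    { toFun := fun f => ∑ σ : Equiv.Perm (Fin n), f (e σ) • pperm u σ
      map_one' := by
        show ∑ σ : Equiv.Perm (Fin n), (1 : Fin (Nat.factorial n) → ℂ) (e σ) • pperm u σ = 1
        simp only [Pi.one_apply, one_smul]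
        exact hsum
      map_mul' := by
        intro f g
        show ∑ σ : Equiv.Perm (Fin n), (f * g) (e σ) • pperm u σ
          = (∑ σ : Equiv.Perm (Fin n), f (e σ) • pperm u σ)
            * ∑ σ : Equiv.Perm (Fin n), g (e σ) • pperm u σ
        rw [Finset.sum_mul_sum]
        have hterm : ∀ σ τ : Equiv.Perm (Fin n),
            (f (e σ) • pperm u σ) * (g (e τ) • pperm u τ)
            = (f (e σ) * g (e τ)) • (if σ = τ then pperm u σ else 0) := by
          intro σ τ
          rw [smul_mul_assoc, mul_smul_comm, smul_smul,
            pperm_mul u hcomm' hidem hRO σ τ]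
        simp_rw [hterm]
        rw [Finset.sum_comm]
        have hdiag : ∀ τ : Equiv.Perm (Fin n),
            ∑ σ : Equiv.Perm (Fin n),
              (f (e σ) * g (e τ)) • (if σ = τ then pperm u σ else 0)
            = (f (e τ) * g (e τ)) • pperm u τ := by
          intro τ
          rw [Finset.sum_congr rfl (fun σ _ => by
            rw [smul_ite, smul_zero])]
          rw [Finset.sum_ite_eq' Finset.univ τ
            (fun σ => (f (e σ) * g (e τ)) • pperm u σ)]
          simp
        simp_rw [hdiag]
        rfl
      map_zero' := by
        show ∑ σ : Equiv.Perm (Fin n), (0 : Fin (Nat.factorial n) → ℂ) (e σ) • pperm u σ = 0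
        simp
      map_add' := by
        intro f g
        show ∑ σ : Equiv.Perm (Fin n), (f + g) (e σ) • pperm u σ
          = (∑ σ : Equiv.Perm (Fin n), f (e σ) • pperm u σ)
            + ∑ σ : Equiv.Perm (Fin n), g (e σ) • pperm u σ
        simp only [Pi.add_apply, add_smul]
        rw [Finset.sum_add_distrib]
      commutes' := by
        intro c
        show ∑ σ : Equiv.Perm (Fin n), (algebraMap ℂ (Fin (Nat.factorial n) → ℂ) c) (e σ) • pperm u σ
          = algebraMap ℂ A c
        have h1 : ∀ σ : Equiv.Perm (Fin n),
            (algebraMap ℂ (Fin (Nat.factorial n) → ℂ) c) (e σ) • pperm u σ = c • pperm u σ := fun _ => rfl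
        rw [Finset.sum_congr rfl (fun σ _ => h1 σ), ← Finset.smul_sum, hsum,
          Algebra.algebraMap_eq_smul_one]
      map_star' := by
        intro f
        show ∑ σ : Equiv.Perm (Fin n), (star f) (e σ) • pperm u σ
          = star (∑ σ : Equiv.Perm (Fin n), f (e σ) • pperm u σ)
        rw [star_sum]
        refine Finset.sum_congr rfl fun σ _ => ?_
        rw [star_smul, pperm_star u hcomm' hself σ]
        rfl }
  have hψv : ∀ i j, ψ (v i j) = u i j := by
    intro i j
    show ∑ σ : Equiv.Perm (Fin n), (v i j) (e σ) • pperm u σ = u i j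
    have : ∀ σ : Equiv.Perm (Fin n), (v i j) (e σ) • pperm u σ
        = if σ i = j then pperm u σ else 0 := by
      intro σ
      simp only [v, Equiv.symm_apply_apply]
      by_cases h : σ i = j <;> simp [h]
    simp_rw [this]
    exact sum_pperm_filter u hcomm' hidem hRO hCO hrow i j
  obtain ⟨φ₀, hφ₀, hφ₀uniq⟩ := huniv A u hself hidem hrow hcol
  have hcompid : ψ.comp φ = StarAlgHom.id ℂ A := by
    have e1 : ψ.comp φ = φ₀ := hφ₀uniq (ψ.comp φ) (by
      intro i j
      rw [StarAlgHom.comp_apply, hφ i j, hψv i j])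
    have e2 : StarAlgHom.id ℂ A = φ₀ := hφ₀uniq _ (by intro i j; rfl)
    rw [e1, e2]
  have hleft : ∀ a, ψ (φ a) = a := by
    intro a
    have := DFunLike.congr_fun hcompid a
    simpa using this
  have hφp : ∀ σ : Equiv.Perm (Fin n), φ (pperm u σ)
      = fun k => if k = e σ then 1 else 0 := by
    intro σ
    rw [pperm, map_list_prod, List.map_ofFn]
    have hx : (⇑φ ∘ fun i => u i (σ i)) = fun i => v i (σ i) := by
      funext i
      simp [Function.comp, hφ]
    rw [hx]
    funext k
    have hev : (List.ofFn fun i => v i (σ i)).prod k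
        = ((List.ofFn fun i => v i (σ i)).map
            (Pi.evalRingHom (fun _ => ℂ) k)).prod := by
      rw [← map_list_prod (Pi.evalRingHom (fun _ => ℂ) k)]
      rfl
    rw [hev, List.map_ofFn]
    have hx2 : ((Pi.evalRingHom (fun _ : Fin (Nat.factorial n) => ℂ) k) ∘
        fun i => v i (σ i)) = fun i => if e.symm k i = σ i then (1 : ℂ) else 0 := by
      funext i
      simp [v, Pi.evalRingHom]
      rfl
    rw [hx2, List.prod_ofFn]
    by_cases h : e.symm k = σ
    · have hk : k = e σ := by rw [← h, Equiv.apply_symm_apply]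
      rw [if_pos hk]
      apply Finset.prod_eq_one
      intro i _
      rw [if_pos (by rw [h])]
    · have hk : ¬ (k = e σ) := by
        intro hc
        exact h (by rw [hc, Equiv.symm_apply_apply])
      rw [if_neg hk]
      have : ∃ i, e.symm k i ≠ σ i := by
        by_contra hc
        push_neg at hc
        exact h (Equiv.ext hc)
      obtain ⟨i, hi⟩ := this
      exact Finset.prod_eq_zero (Finset.mem_univ i) (if_neg hi)
  have hright : ∀ f : Fin (Nat.factorial n) → ℂ, φ (ψ f) = f := by
    intro f
    show φ (∑ σ : Equiv.Perm (Fin n), f (e σ) • pperm u σ) = f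
    rw [map_sum]
    simp_rw [map_smul, hφp]
    funext k
    simp only [Finset.sum_apply, Pi.smul_apply, smul_eq_mul]
    have : ∀ σ : Equiv.Perm (Fin n),
        f (e σ) * (if k = e σ then (1:ℂ) else 0)
        = if σ = e.symm k then f (e σ) else 0 := by
      intro σ
      by_cases h : σ = e.symm k
      · rw [if_pos h, if_pos (by rw [h, Equiv.apply_symm_apply]), mul_one]
      · rw [if_neg h, if_neg (by
          intro hc
          exact h (by rw [hc, Equiv.symm_apply_apply])), mul_zero]
    simp_rw [this]
    rw [Finset.sum_ite_eq' Finset.univ (e.symm k) (fun σ => f (e σ))]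
    rw [if_pos (Finset.mem_univ _), Equiv.apply_symm_apply]
  have hinj : Function.Injective φ := by
    intro x y h
    rw [← hleft x, ← hleft y, h]
  constructor
  · intro a b
    apply hinj
    rw [map_mul, map_mul, mul_comm]
  · refine ⟨?_⟩
    exact
      { toFun := φ
        invFun := ψ
        left_inv := hleft
        right_inv := hright
        map_mul' := map_mul φ
        map_add' := map_add φ
        map_smul' := map_smul φ
        map_star' := map_star φ }
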